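/- A 2-connected strongly chordal graph on at least 3 vertices has a locally connected spanning tree. Consequently, a strongly chordal graph G with at least 3 vertices has a locally connected spanning tree if and only if G is 2-connected. -/

import Mathlib

/-- `T` is a locally connected spanning tree of `G`. -/
def IsLCST {V : Type*} (G T : SimpleGraph V) : Prop :=
  T ≤ G ∧ T.Connected ∧ T.IsAcyclic ∧
    ∀ v : V, (G.induce (T.neighborSet v)).Connected

/-- The identity ordering on `Fin n` is a strong elimination order of `G`. -/
def IsSEO {n : ℕ} (G : SimpleGraph (Fin n)) : Prop :=
  ∀ i j k : Fin n, i ≤ j → j ≤ k →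
    (j = i ∨ G.Adj i j) → (k = i ∨ G.Adj i k) →
      ∀ w : Fin n, i ≤ w → (w = j ∨ G.Adj j w) → (w = k ∨ G.Adj k w)

open SimpleGraph

section Helpers

variable {V : Type*} {G : SimpleGraph V}

/-- Reachability in an induced subgraph is monotone in the vertex set. -/
lemma reachable_induce_mono {s t : Set V} (hst : s ⊆ t) :
    ∀ {A B : s}, (G.induce s).Reachable A B →
      (G.induce t).Reachable ⟨A.1, hst A.2⟩ ⟨B.1, hst B.2⟩ := by
  intro A B h
  obtain ⟨w⟩ := h
  induction w with
  | nil => exact Reachable.refl _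
  | @cons A C B h p ih =>
      have hAC : G.Adj A.1 C.1 := h
      have step : (G.induce t).Adj ⟨A.1, hst A.2⟩ ⟨C.1, hst C.2⟩ := hAC
      exact step.reachable.trans ih

/-- If a locally connected spanning tree exists, removing any vertex keeps the
graph connected (walks through `v` can be rerouted through `v`'s tree
neighborhood). -/
lemma lcst_avoid {T : SimpleGraph V} (hle : T ≤ G)
    (hloc : ∀ v : V, (G.induce (T.neighborSet v)).Connected) (v : V) :
    ∀ (k : ℕ) (a b : V) (ha : a ≠ v) (hb : b ≠ v) (w : T.Walk a b),
      w.length ≤ k →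
      (G.induce {u | u ≠ v}).Reachable ⟨a, ha⟩ ⟨b, hb⟩ := by
  intro k
  induction k with
  | zero =>
      intro a b ha hb w hw
      cases w with
      | nil => exact Reachable.refl _
      | cons h p => simp at hw
  | succ k ih =>
      intro a b ha hb w hw
      cases w with
      | nil => exact Reachable.refl _
      | @cons _ c _ h p =>
          by_cases hc : c = v
          · subst hc
            cases p with
            | nil => exact absurd rfl hb
            | @cons _ d _ h2 p2 =>
                have hd : d ≠ c := fun hdv => T.irrefl (hdv ▸ h2)
                have haN : a ∈ T.neighborSet c := h.symm
                have hdN : d ∈ T.neighborSet c := h2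
                have hr : (G.induce (T.neighborSet c)).Reachable ⟨a, haN⟩ ⟨d, hdN⟩ :=
                  (hloc c).preconnected _ _
                have hsub : T.neighborSet c ⊆ {u | u ≠ c} := by
                  intro u hu
                  exact fun huv => T.irrefl (huv ▸ hu)
                have hr2 : (G.induce {u | u ≠ c}).Reachable ⟨a, ha⟩ ⟨d, hd⟩ :=
                  reachable_induce_mono hsub hr
                have hr3 := ih d b hd hb p2 (by
                  have := hw
                  simp only [SimpleGraph.Walk.length_cons] at this
                  omega)
                exact hr2.trans hr3
          · have hac : G.Adj a c := hle h
            have step : (G.induce {u | u ≠ v}).Adj ⟨a, ha⟩ ⟨c, hc⟩ := hac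
            exact step.reachable.trans (ih c b hc hb p (by
              simp only [SimpleGraph.Walk.length_cons] at hw; omega))

/-- Forward direction: an LCST forces 2-connectivity (given ≥ 3 vertices). -/
lemma lcst_forward {n : ℕ} (hn : 3 ≤ n) {G : SimpleGraph (Fin n)}
    (h : ∃ T, IsLCST G T) :
    G.Connected ∧ ∀ v : Fin n, (G.induce {u | u ≠ v}).Connected := by
  obtain ⟨T, hle, hTc, _, hloc⟩ := h
  constructor
  · exact hTc.mono hle
  · intro v
    rw [SimpleGraph.connected_iff]
    constructor
    · rintro ⟨a, ha⟩ ⟨b, hb⟩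
      obtain ⟨w⟩ := hTc.preconnected a b
      exact lcst_avoid hle hloc v w.length a b ha hb w le_rfl
    · by_cases h0 : v = ⟨0, by omega⟩
      · refine ⟨⟨⟨1, by omega⟩, ?_⟩⟩
        subst h0
        simp only [Set.mem_setOf_eq, ne_eq]
        intro h'
        exact absurd (congrArg Fin.val h') (by simp)
      · exact ⟨⟨⟨0, by omega⟩, fun h' => h0 h'.symm⟩⟩

end Helpers


section Construction

open Classical in
noncomputable section

variable {m : ℕ}

/-- The top vertex. -/
def root (m : ℕ) : Fin (m + 3) := ⟨m + 2, by omega⟩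

lemma le_root (v : Fin (m + 3)) : v ≤ root m := by
  rcases v with ⟨v, hv⟩
  simp only [root, Fin.le_def]
  omega

variable {H : SimpleGraph (Fin (m + 3))}

/-- Later neighbors of a common earlier vertex are adjacent or equal. -/
lemma seo_clique (hseo : IsSEO H) {v x y : Fin (m + 3)} (hx : v ≤ x) (hy : v ≤ y)
    (hax : H.Adj v x) (hay : H.Adj v y) : x = y ∨ H.Adj x y := by
  rcases le_total x y with h | h
  · rcases hseo v x y hx h (Or.inr hax) (Or.inr hay) x hx (Or.inl rfl) with h' | h'
    · exact Or.inl h'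
    · exact Or.inr h'.symm
  · rcases hseo v y x hy h (Or.inr hay) (Or.inr hax) y hy (Or.inl rfl) with h' | h'
    · exact Or.inl h'.symm
    · exact Or.inr h'

/-- Any walk between two high vertices can be replaced by a walk through high
vertices only (shortcutting minimal vertices using the elimination order). -/
lemma exists_high_walk (hseo : IsSEO H) :
    ∀ (k : ℕ) (z a b : Fin (m + 3)) (w : H.Walk a b), w.length ≤ k → z ≤ a → z ≤ b →
      ∃ w' : H.Walk a b, ∀ c ∈ w'.support, z ≤ c := by
  intro k
  induction k with
  | zero =>
      intro z a b w hw ha _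
      cases w with
      | nil => exact ⟨.nil, by simpa using ha⟩
      | cons h p => simp at hw
  | succ k ih =>
      intro z a b w hw ha hb
      by_cases hall : ∀ c ∈ w.support, z ≤ c
      · exact ⟨w, hall⟩
      · push_neg at hall
        obtain ⟨c0, hc0mem, hc0⟩ := hall
        have hSne : w.support.toFinset.Nonempty :=
          ⟨a, by simp [SimpleGraph.Walk.start_mem_support]⟩
        set mv := w.support.toFinset.min' hSne with hmv_def
        have hmv_mem : mv ∈ w.support := by
          have := w.support.toFinset.min'_mem hSne
          simpa using this
        have hmv_le : ∀ c ∈ w.support, mv ≤ c := fun c hc =>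
          w.support.toFinset.min'_le c (by simpa using hc)
        have hmvz : mv < z := lt_of_le_of_lt (hmv_le c0 hc0mem) hc0
        have hma : mv ≠ a := fun h => absurd (h ▸ hmvz) (not_lt.2 ha)
        have hmb : mv ≠ b := fun h => absurd (h ▸ hmvz) (not_lt.2 hb)
        have hspec := w.take_spec hmv_mem
        set q1 := w.takeUntil mv hmv_mem with hq1_def
        set q2 := w.dropUntil mv hmv_mem with hq2_def
        have hlen : q1.length + q2.length = w.length := by
          rw [← SimpleGraph.Walk.length_append, hspec]
        -- destructure q1.reverse : Walk mv a and q2 : Walk mv b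
        obtain ⟨x, hx, r1, hq1r⟩ := SimpleGraph.Walk.exists_eq_cons_of_ne hma q1.reverse
        obtain ⟨y, hy, r2, hq2'⟩ := SimpleGraph.Walk.exists_eq_cons_of_ne hmb q2
        have hxm : mv < x := lt_of_le_of_ne
          (hmv_le x (by
            have hx1 : x ∈ q1.reverse.support := by
              rw [hq1r]
              simp [SimpleGraph.Walk.support_cons, SimpleGraph.Walk.start_mem_support]
            rw [SimpleGraph.Walk.support_reverse, List.mem_reverse] at hx1
            exact SimpleGraph.Walk.support_takeUntil_subset w hmv_mem hx1))
          (fun h => H.irrefl (h ▸ hx))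
        have hym : mv < y := lt_of_le_of_ne
          (hmv_le y (by
            have hy1 : y ∈ q2.support := by
              rw [hq2']
              simp [SimpleGraph.Walk.support_cons, SimpleGraph.Walk.start_mem_support]
            exact SimpleGraph.Walk.support_dropUntil_subset w hmv_mem hy1))
          (fun h => H.irrefl (h ▸ hy))
        have hq1len : q1.length = r1.length + 1 := by
          have h1 := congrArg SimpleGraph.Walk.length hq1r
          rw [SimpleGraph.Walk.length_reverse] at h1
          simpa using h1
        have hq2len : q2.length = r2.length + 1 := by
          have h1 := congrArg SimpleGraph.Walk.length hq2'
          simpa using h1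
        rcases seo_clique hseo (le_of_lt hxm) (le_of_lt hym) hx hy with heq | hadj
        · -- x = y : bypass mv entirely
          subst heq
          refine ih z a b (r1.reverse.append r2) ?_ ha hb
          have : (r1.reverse.append r2).length = r1.length + r2.length := by
            simp [SimpleGraph.Walk.length_append, SimpleGraph.Walk.length_reverse]
          omega
        · refine ih z a b (r1.reverse.append (SimpleGraph.Walk.cons hadj r2)) ?_ ha hb
          have : (r1.reverse.append (SimpleGraph.Walk.cons hadj r2)).length
              = r1.length + (r2.length + 1) := by
            simp [SimpleGraph.Walk.length_append, SimpleGraph.Walk.length_reverse]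
          omega

/-- In a connected graph with elimination order, every non-top vertex has a
later neighbor. -/
lemma later_nbr (hseo : IsSEO H) (hconn : H.Connected) :
    ∀ z : Fin (m + 3), z ≠ root m → ∃ u, z < u ∧ H.Adj z u := by
  intro z hz
  obtain ⟨w⟩ := hconn.preconnected z (root m)
  obtain ⟨w', hw'⟩ := exists_high_walk hseo w.length z z (root m) w le_rfl le_rfl (le_root z)
  cases w' with
  | nil => exact absurd rfl hz
  | @cons _ x _ h p =>
      refine ⟨x, lt_of_le_of_ne ?_ (fun hh => H.irrefl (hh ▸ h)), h⟩
      exact hw' x (by simp [SimpleGraph.Walk.support_cons, SimpleGraph.Walk.start_mem_support])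

/-- Existence of a good parent for every vertex. -/
lemma parent_exists (hseo : IsSEO H) (hconn : H.Connected) (z : Fin (m + 3)) :
    ∃ p : Fin (m + 3), (z = root m → p = z) ∧ (z ≠ root m → z < p ∧ H.Adj z p) ∧
      ∀ w, H.Adj z w → (∃ t, z < t ∧ (t = w ∨ H.Adj w t)) → (p = w ∨ H.Adj w p) := by
  classical
  by_cases hz : z = root m
  · refine ⟨z, fun _ => rfl, fun h => absurd hz h, ?_⟩
    rintro w _ ⟨t, ht, _⟩
    exact absurd ht (not_lt.2 (hz ▸ le_root t))
  · by_cases hV : ∃ v, v < z ∧ H.Adj v z ∧ ∃ t, z < t ∧ (t = v ∨ H.Adj v t)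
    · obtain ⟨v, hv⟩ := hV
      set Vs := Finset.univ.filter
        (fun v : Fin (m+3) => v < z ∧ H.Adj v z ∧ ∃ t, z < t ∧ (t = v ∨ H.Adj v t)) with hVs_def
      have hVsne : Vs.Nonempty := ⟨v, by simp [hVs_def, hv]⟩
      set v0 := Vs.min' hVsne with hv0_def
      have hv0 : v0 < z ∧ H.Adj v0 z ∧ ∃ t, z < t ∧ (t = v0 ∨ H.Adj v0 t) := by
        have := Vs.min'_mem hVsne
        simpa [hVs_def] using this
      obtain ⟨hv0z, hv0adj, t, htz, htv0⟩ := hv0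
      have htadj : H.Adj v0 t := by
        rcases htv0 with h | h
        · exact absurd (h ▸ htz) (not_lt.2 (le_of_lt hv0z))
        · exact h
      set Cs := Finset.univ.filter (fun u : Fin (m+3) => v0 < u ∧ H.Adj v0 u) with hCs_def
      have hCsne : Cs.Nonempty := ⟨t, by simp [hCs_def, htadj, lt_trans hv0z htz]⟩
      set p := Cs.max' hCsne with hp_def
      have hp : v0 < p ∧ H.Adj v0 p := by
        have := Cs.max'_mem hCsne
        simpa [hCs_def] using this
      have hpt : t ≤ p := Cs.le_max' t (by simp [hCs_def, htadj, lt_trans hv0z htz])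
      have hpz : z < p := lt_of_lt_of_le htz hpt
      have hadjzp : H.Adj z p := by
        rcases hseo v0 z p (le_of_lt hv0z) (le_of_lt hpz) (Or.inr hv0adj) (Or.inr hp.2)
          z (le_of_lt hv0z) (Or.inl rfl) with h | h
        · exact absurd h (ne_of_lt hpz)
        · exact h.symm
      refine ⟨p, fun h => absurd h hz, fun _ => ⟨hpz, hadjzp⟩, ?_⟩
      rintro w hw ⟨t', ht', htw'⟩
      have hwz : w ≠ z := fun h => H.irrefl (h ▸ hw)
      rcases lt_or_gt_of_ne hwz with hlt | hgt
      · have hwV : w ∈ Vs := by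
          simp only [hVs_def, Finset.mem_filter, Finset.mem_univ, true_and]
          exact ⟨hlt, hw.symm, t', ht', htw'⟩
        have hv0w : v0 ≤ w := Vs.min'_le w hwV
        rcases hseo v0 z p (le_of_lt hv0z) (le_of_lt hpz) (Or.inr hv0adj) (Or.inr hp.2)
          w hv0w (Or.inr hw) with h | h
        · exact Or.inl h.symm
        · exact Or.inr h.symm
      · rcases le_or_gt p w with hle | hlt
        · rcases hseo z p w (le_of_lt hpz) hle (Or.inr hadjzp) (Or.inr hw)
            p (le_of_lt hpz) (Or.inl rfl) with h | h
          · exact Or.inl h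
          · exact Or.inr h
        · rcases hseo z w p (le_of_lt hgt) (le_of_lt hlt) (Or.inr hw) (Or.inr hadjzp)
            w (le_of_lt hgt) (Or.inl rfl) with h | h
          · exact Or.inl h.symm
          · exact Or.inr h.symm
    · obtain ⟨u, hu, hadj⟩ := later_nbr hseo hconn z hz
      set Cs := Finset.univ.filter (fun u : Fin (m+3) => z < u ∧ H.Adj z u) with hCs_def
      have hCsne : Cs.Nonempty := ⟨u, by simp [hCs_def, hu, hadj]⟩
      set p := Cs.max' hCsne with hp_def
      have hp : z < p ∧ H.Adj z p := by
        have := Cs.max'_mem hCsne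
        simpa [hCs_def] using this
      refine ⟨p, fun h => absurd h hz, fun _ => hp, ?_⟩
      rintro w hw ⟨t', ht', htw'⟩
      have hwz : w ≠ z := fun h => H.irrefl (h ▸ hw)
      rcases lt_or_gt_of_ne hwz with hlt | hgt
      · exact absurd ⟨w, hlt, hw.symm, t', ht', htw'⟩ hV
      · rcases le_or_gt p w with hle | hlt
        · rcases hseo z p w (le_of_lt hp.1) hle (Or.inr hp.2) (Or.inr hw)
            p (le_of_lt hp.1) (Or.inl rfl) with h | h
          · exact Or.inl h
          · exact Or.inr h
        · rcases hseo z w p (le_of_lt hgt) (le_of_lt hlt) (Or.inr hw) (Or.inr hp.2)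
            w (le_of_lt hgt) (Or.inl rfl) with h | h
          · exact Or.inl h.symm
          · exact Or.inr h.symm

/-- The tree determined by a parent function. -/
def mkTree (par : Fin (m + 3) → Fin (m + 3)) : SimpleGraph (Fin (m + 3)) where
  Adj a b := (par a = b ∨ par b = a) ∧ a ≠ b
  symm := by
    constructor
    rintro a b ⟨h, hne⟩
    exact ⟨h.symm, hne.symm⟩
  loopless := by
    constructor
    rintro a ⟨_, h⟩
    exact h rfl

section Tree

variable {par : Fin (m + 3) → Fin (m + 3)}
variable (hroot : par (root m) = root m)
variable (hlt : ∀ z, z ≠ root m → z < par z)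
variable (hadj : ∀ z, z ≠ root m → H.Adj z (par z))

include hroot hlt in
lemma mkTree_adj_cases {a b : Fin (m+3)} (h : (mkTree par).Adj a b) :
    (a ≠ root m ∧ par a = b) ∨ (b ≠ root m ∧ par b = a) := by
  obtain ⟨h1, hne⟩ := h
  rcases h1 with h1 | h1
  · by_cases ha : a = root m
    · subst ha
      rw [hroot] at h1
      exact absurd h1 hne
    · exact Or.inl ⟨ha, h1⟩
  · by_cases hb : b = root m
    · subst hb
      rw [hroot] at h1
      exact absurd h1 hne.symm
    · exact Or.inr ⟨hb, h1⟩

include hroot hlt hadj in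
lemma mkTree_le : mkTree par ≤ H := by
  intro a b h
  rcases mkTree_adj_cases hroot hlt h with ⟨ha, h1⟩ | ⟨hb, h1⟩
  · exact h1 ▸ hadj a ha
  · exact (h1 ▸ hadj b hb).symm

include hlt in
lemma mkTree_reach_root : ∀ (k : ℕ) (v : Fin (m+3)), (m + 2) - v.val ≤ k →
    (mkTree par).Reachable v (root m) := by
  intro k
  induction k with
  | zero =>
      intro v hv
      have : v = root m := by
        have h1 : v.val < m + 3 := v.isLt
        have : v.val = m + 2 := by omega
        exact Fin.ext this
      exact this ▸ Reachable.refl _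
  | succ k ih =>
      intro v hv
      by_cases hv' : v = root m
      · exact hv' ▸ Reachable.refl _
      · have hstep : (mkTree par).Adj v (par v) :=
          ⟨Or.inl rfl, ne_of_lt (hlt v hv')⟩
        refine hstep.reachable.trans (ih (par v) ?_)
        have h1 := hlt v hv'
        rw [Fin.lt_def] at h1
        have h2 : v.val < m + 2 := by
          rcases Nat.lt_or_ge v.val (m+2) with h | h
          · exact h
          · exact absurd (Fin.ext (by omega : v.val = m + 2) : v = root m) hv'
        omega

include hlt in
lemma mkTree_connected : (mkTree par).Connected := by
  rw [SimpleGraph.connected_iff]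
  refine ⟨fun a b => ?_, ⟨root m⟩⟩
  exact (mkTree_reach_root hlt _ a le_rfl).trans (mkTree_reach_root hlt _ b le_rfl).symm

include hroot hlt in
lemma mkTree_acyclic : (mkTree par).IsAcyclic := by
  intro v c hc
  have hvmem : v ∈ c.support := SimpleGraph.Walk.start_mem_support c
  have hSne : c.support.toFinset.Nonempty := ⟨v, by simpa using hvmem⟩
  set mv := c.support.toFinset.min' hSne with hmv_def
  have hmv_mem : mv ∈ c.support := by
    have := c.support.toFinset.min'_mem hSne
    simpa using this
  have hmv_le : ∀ x ∈ c.support, mv ≤ x := fun x hx =>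
    c.support.toFinset.min'_le x (by simpa using hx)
  set c' := c.rotate mv hmv_mem with hc'_def
  have hc'cyc : c'.IsCycle := hc.rotate hmv_mem
  have hc'sup : ∀ x ∈ c'.support, mv ≤ x := by
    intro x hx
    refine hmv_le x ?_
    have h1 := SimpleGraph.Walk.support_rotate c mv hmv_mem
    rw [SimpleGraph.Walk.mem_support_iff] at hx
    rcases hx with h | h
    · exact h ▸ hmv_mem
    · exact List.mem_of_mem_tail (h1.mem_iff.mp h)
  clear_value c'
  have hne : c' ≠ SimpleGraph.Walk.nil := hc'cyc.ne_nil
  rcases c' with _ | ⟨hx, p⟩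
  · exact hne rfl
  · rename_i x
    -- hx : (mkTree par).Adj mv x, p : Walk x mv
    have hxmv : mv ≠ x := fun h => (mkTree par).irrefl (h ▸ hx)
    obtain ⟨y, hy, q, hpr⟩ :=
      SimpleGraph.Walk.exists_eq_cons_of_ne hxmv p.reverse
    -- hy : Adj mv y, q : Walk y x
    have hyedge : s(mv, y) ∈ p.edges := by
      have h1 : s(mv, y) ∈ p.reverse.edges := by
        rw [hpr]
        simp
      rwa [SimpleGraph.Walk.edges_reverse, List.mem_reverse] at h1
    have hxy : x ≠ y := by
      intro h
      subst h
      have hnodup := hc'cyc.edges_nodup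
      rw [SimpleGraph.Walk.edges_cons, List.nodup_cons] at hnodup
      exact hnodup.1 (by simpa [Sym2.eq_swap] using hyedge)
    have hxm : mv ≤ x := hc'sup x (by simp [SimpleGraph.Walk.support_cons,
      SimpleGraph.Walk.start_mem_support])
    have hym : mv ≤ y := by
      refine hc'sup y ?_
      rw [SimpleGraph.Walk.support_cons]
      right
      have h2 : y ∈ p.reverse.support := by
        rw [hpr]
        simp [SimpleGraph.Walk.support_cons, SimpleGraph.Walk.start_mem_support]
      rwa [SimpleGraph.Walk.support_reverse, List.mem_reverse] at h2
    have hpx : par mv = x := by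
      rcases mkTree_adj_cases hroot hlt hx with ⟨_, h1⟩ | ⟨hxr, h1⟩
      · exact h1
      · exact absurd (h1 ▸ hlt x hxr) (not_lt.2 hxm)
    have hpy : par mv = y := by
      rcases mkTree_adj_cases hroot hlt hy with ⟨_, h1⟩ | ⟨hyr, h1⟩
      · exact h1
      · exact absurd (h1 ▸ hlt y hyr) (not_lt.2 hym)
    exact hxy (hpx ▸ hpy)

end Tree

/-- Iterated parent. -/
def parIter (par : Fin (m + 3) → Fin (m + 3)) : ℕ → Fin (m + 3) → Fin (m + 3)
  | 0, x => x
  | k+1, x => par (parIter par k x)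

section Chains

variable {par : Fin (m + 3) → Fin (m + 3)}
variable (hroot : par (root m) = root m)
variable (hlt : ∀ z, z ≠ root m → z < par z)
variable (hadj : ∀ z, z ≠ root m → H.Adj z (par z))
variable (hdisc : ∀ z w, H.Adj z w → (∃ t, z < t ∧ (t = w ∨ H.Adj w t)) →
    (par z = w ∨ H.Adj w (par z)))

include hroot hlt in
lemma le_par (z : Fin (m+3)) : z ≤ par z := by
  by_cases hz : z = root m
  · exact le_of_eq (hz ▸ hroot.symm)
  · exact le_of_lt (hlt z hz)

include hroot hlt in
lemma parIter_le_succ (k : ℕ) (x : Fin (m+3)) :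
    parIter par k x ≤ parIter par (k+1) x := le_par hroot hlt _

include hroot hlt in
lemma parIter_mono (x : Fin (m+3)) : ∀ {k l : ℕ}, k ≤ l →
    parIter par k x ≤ parIter par l x := by
  intro k l hkl
  induction l with
  | zero => simp_all
  | succ l ih =>
      rcases Nat.lt_or_ge k (l+1) with h | h
      · exact le_trans (ih (by omega)) (parIter_le_succ hroot hlt l x)
      · have : k = l + 1 := by omega
        exact le_of_eq (this ▸ rfl)

lemma parIter_add (a b : ℕ) (x : Fin (m+3)) :
    parIter par (a + b) x = parIter par b (parIter par a x) := by
  induction b with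
  | zero => rfl
  | succ b ih => rw [← Nat.add_assoc]; show par _ = par _; rw [ih]

include hroot in
lemma parIter_root (d : ℕ) : parIter par d (root m) = root m := by
  induction d with
  | zero => rfl
  | succ d ih => show par _ = _; rw [ih, hroot]

include hroot in
lemma parIter_root_stab (x : Fin (m+3)) {k : ℕ} (hk : parIter par k x = root m) :
    ∀ l, k ≤ l → parIter par l x = root m := by
  intro l hl
  obtain ⟨d, rfl⟩ := Nat.exists_eq_add_of_le hl
  rw [parIter_add, hk, parIter_root hroot]

include hroot hlt in
lemma eq_root_of_parIter_eq {x : Fin (m+3)} {a b : ℕ} (hab : a < b)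
    (h : parIter par a x = parIter par b x) : parIter par a x = root m := by
  by_contra hne
  have h1 : parIter par a x < parIter par (a+1) x := hlt _ hne
  have h2 : parIter par (a+1) x ≤ parIter par b x := parIter_mono hroot hlt x (by omega)
  exact absurd (h ▸ lt_of_lt_of_le h1 h2) (lt_irrefl _)

include hroot hlt in
lemma exists_parIter_root (x : Fin (m+3)) : ∃ k, parIter par k x = root m := by
  suffices h : ∀ (j : ℕ) (y : Fin (m+3)), (m + 2) - y.val ≤ j → ∃ k, parIter par k y = root m by
    exact h (m+2) x (by omega)
  intro j
  induction j with
  | zero =>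
      intro y hy
      refine ⟨0, Fin.ext ?_⟩
      have := y.isLt
      show y.val = m + 2
      omega
  | succ j ih =>
      intro y hy
      by_cases hyr : y = root m
      · exact ⟨0, hyr⟩
      · have h1 := hlt y hyr
        rw [Fin.lt_def] at h1
        have h2 : y.val < m + 2 := by
          rcases Nat.lt_or_ge y.val (m+2) with h | h
          · exact h
          · exact absurd (Fin.ext (by omega : y.val = m+2) : y = root m) hyr
        obtain ⟨k, hk⟩ := ih (par y) (by omega)
        refine ⟨1 + k, ?_⟩
        rw [parIter_add]
        exact hk

include hroot hlt hadj hdisc in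
/-- Advancing the lower of two chains keeps it in both closed neighborhoods. -/
lemma chain_adv {x y : Fin (m+3)} (hxy : H.Adj x y) (a : Fin (m+3))
    (h1 : a = x ∨ H.Adj x a) (h2 : a = y ∨ H.Adj y a)
    {b : Fin (m+3)} (h3 : b = x ∨ H.Adj x b) (h4 : b = y ∨ H.Adj y b)
    (hab : a < b) : (par a = x ∨ H.Adj x (par a)) ∧ (par a = y ∨ H.Adj y (par a)) := by
  have haroot : a ≠ root m := ne_of_lt (lt_of_lt_of_le hab (le_root b))
  constructor
  · rcases h1 with h | h
    · subst h
      right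
      exact hadj _ haroot
    · exact hdisc a x h.symm ⟨b, hab, h3⟩
  · rcases h2 with h | h
    · subst h
      right
      exact hadj _ haroot
    · exact hdisc a y h.symm ⟨b, hab, h4⟩

include hroot hlt hadj hdisc in
/-- Two chains from adjacent vertices meet while staying inside both closed
neighborhoods. -/
lemma chains_meet {x y : Fin (m+3)} (hxy : H.Adj x y) :
    ∀ (d i j : ℕ),
      (m + 2) - (parIter par i x).val + ((m + 2) - (parIter par j y).val) ≤ d →
      (parIter par i x = x ∨ H.Adj x (parIter par i x)) →
      (parIter par i x = y ∨ H.Adj y (parIter par i x)) →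
      (parIter par j y = x ∨ H.Adj x (parIter par j y)) →
      (parIter par j y = y ∨ H.Adj y (parIter par j y)) →
      ∃ k l, i ≤ k ∧ j ≤ l ∧ parIter par k x = parIter par l y ∧
        (∀ i', i ≤ i' → i' ≤ k →
          (parIter par i' x = x ∨ H.Adj x (parIter par i' x)) ∧
          (parIter par i' x = y ∨ H.Adj y (parIter par i' x))) ∧
        (∀ j', j ≤ j' → j' ≤ l →
          (parIter par j' y = x ∨ H.Adj x (parIter par j' y)) ∧
          (parIter par j' y = y ∨ H.Adj y (parIter par j' y))) := by
  intro d
  induction d with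
  | zero =>
      intro i j hd h1 h2 h3 h4
      have hx' : (parIter par i x).val = m + 2 := by
        have := (parIter par i x).isLt
        have := (parIter par j y).isLt
        omega
      have hy' : (parIter par j y).val = m + 2 := by
        have := (parIter par i x).isLt
        omega
      refine ⟨i, j, le_rfl, le_rfl, Fin.ext (by omega), ?_, ?_⟩
      · intro i' h h'
        have : i' = i := le_antisymm h' h
        subst this
        exact ⟨h1, h2⟩
      · intro j' h h'
        have : j' = j := le_antisymm h' h
        subst this
        exact ⟨h3, h4⟩
  | succ d ih =>
      intro i j hd h1 h2 h3 h4
      by_cases heq : parIter par i x = parIter par j y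
      · refine ⟨i, j, le_rfl, le_rfl, heq, ?_, ?_⟩
        · intro i' h h'
          have : i' = i := le_antisymm h' h
          subst this
          exact ⟨h1, h2⟩
        · intro j' h h'
          have : j' = j := le_antisymm h' h
          subst this
          exact ⟨h3, h4⟩
      · rcases lt_or_gt_of_ne heq with hab | hab
        · -- advance the x chain
          obtain ⟨g1, g2⟩ := chain_adv hroot hlt hadj hdisc hxy _ h1 h2 h3 h4 hab
          have hstep : parIter par i x < parIter par (i+1) x :=
            hlt _ (ne_of_lt (lt_of_lt_of_le hab (le_root _)))
          have hd' : (m + 2) - (parIter par (i+1) x).val +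
              ((m + 2) - (parIter par j y).val) ≤ d := by
            rw [Fin.lt_def] at hstep hab
            have hr := le_root (parIter par j y)
            rw [Fin.le_def] at hr
            have : (root m).val = m + 2 := rfl
            omega
          obtain ⟨k, l, hik, hjl, hkl, wX, wY⟩ := ih (i+1) j hd' g1 g2 h3 h4
          refine ⟨k, l, by omega, hjl, hkl, ?_, wY⟩
          intro i' h h'
          rcases Nat.eq_or_lt_of_le h with h'' | h''
          · subst h''
            exact ⟨h1, h2⟩
          · exact wX i' (by omega) h'
        · -- advance the y chain
          have hab' : parIter par j y < parIter par i x := hab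
          obtain ⟨g3, g4⟩ := chain_adv hroot hlt hadj hdisc hxy.symm _ h4 h3 h2 h1 hab'
          have hstep : parIter par j y < parIter par (j+1) y :=
            hlt _ (ne_of_lt (lt_of_lt_of_le hab' (le_root _)))
          have hd' : (m + 2) - (parIter par i x).val +
              ((m + 2) - (parIter par (j+1) y).val) ≤ d := by
            rw [Fin.lt_def] at hstep hab'
            have hr := le_root (parIter par i x)
            rw [Fin.le_def] at hr
            have : (root m).val = m + 2 := rfl
            omega
          obtain ⟨k, l, hik, hjl, hkl, wX, wY⟩ := ih i (j+1) hd' h1 h2 g4 g3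
          refine ⟨k, l, hik, by omega, hkl, wX, ?_⟩
          intro j' h h'
          rcases Nat.eq_or_lt_of_le h with h'' | h''
          · subst h''
            exact ⟨h3, h4⟩
          · exact wY j' (by omega) h'

open Classical in
/-- The tree-neighbor of `v` in the direction of `x`. -/
noncomputable def phi (par : Fin (m + 3) → Fin (m + 3)) (v x : Fin (m+3)) : Fin (m+3) :=
  if h : ∃ k, parIter par (k+1) x = v then parIter par (Nat.find h) x else par v


lemma phi_of_hits {v x : Fin (m+3)} (h : ∃ k, parIter par (k+1) x = v) :
    phi par v x = parIter par (Nat.find h) x := by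
  rw [phi, dif_pos h]

lemma phi_of_not_hits {v x : Fin (m+3)} (h : ¬ ∃ k, parIter par (k+1) x = v) :
    phi par v x = par v := by
  rw [phi, dif_neg h]

lemma hits_pred_ne {v x : Fin (m+3)} (hxv : x ≠ v) (h : ∃ k, parIter par (k+1) x = v) :
    parIter par (Nat.find h) x ≠ v := by
  intro hbad
  rcases Nat.eq_zero_or_pos (Nat.find h) with h0 | h0
  · rw [h0] at hbad
    exact hxv hbad
  · obtain ⟨k', hk'⟩ : ∃ k', Nat.find h = k' + 1 := ⟨Nat.find h - 1, by omega⟩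
    exact Nat.find_min h (by omega : k' < Nat.find h) (hk' ▸ hbad)

include hroot hlt in
lemma phi_uniq {v x : Fin (m+3)} (hxv : x ≠ v) (h : ∃ k, parIter par (k+1) x = v)
    {a : ℕ} (ha1 : parIter par (a+1) x = v) (ha0 : parIter par a x ≠ v) :
    phi par v x = parIter par a x := by
  rw [phi_of_hits h]
  set k0 := Nat.find h with hk0
  have hmin : k0 ≤ a := Nat.find_min' h ha1
  rcases Nat.eq_or_lt_of_le hmin with hE | hL
  · rw [hE]
  · exfalso
    have h1 : parIter par (k0+1) x = parIter par (a+1) x := by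
      rw [Nat.find_spec h, ha1]
    have h2 : parIter par (k0+1) x = root m :=
      eq_root_of_parIter_eq hroot hlt (by omega) h1
    have h3 : parIter par a x = root m :=
      parIter_root_stab hroot (x := x) h2 a (by omega)
    have h4 : v = root m := by rw [← Nat.find_spec h, h2]
    exact ha0 (h3.trans h4.symm)

include hroot hlt in
lemma phi_mem {v x : Fin (m+3)} (hxv : x ≠ v) : (mkTree par).Adj v (phi par v x) := by
  by_cases h : ∃ k, parIter par (k+1) x = v
  · rw [phi_of_hits h]
    have h1 : par (parIter par (Nat.find h) x) = v := Nat.find_spec h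
    exact ⟨Or.inr h1, fun hh => hits_pred_ne hxv h hh.symm⟩
  · have hvroot : v ≠ root m := by
      intro hv
      obtain ⟨k, hk⟩ := exists_parIter_root hroot hlt x
      rcases Nat.eq_zero_or_pos k with h0 | h0
      · exact hxv (by rw [h0] at hk; exact hk.trans hv.symm)
      · obtain ⟨k', rfl⟩ : ∃ k', k = k' + 1 := ⟨k - 1, by omega⟩
        exact h ⟨k', hk.trans hv.symm⟩
    rw [phi_of_not_hits h]
    exact ⟨Or.inl rfl, ne_of_lt (hlt v hvroot)⟩

include hroot hlt in
lemma phi_fix {v a : Fin (m+3)} (hva : (mkTree par).Adj v a) : phi par v a = a := by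
  rcases mkTree_adj_cases hroot hlt hva with ⟨hvr, h1⟩ | ⟨har, h1⟩
  · -- par v = a : the chain of a never meets v
    have hnot : ¬ ∃ k, parIter par (k+1) a = v := by
      rintro ⟨k, hk⟩
      have hav : a ≤ v := by
        calc a ≤ parIter par (k+1) a := by
              have : parIter par 0 a ≤ parIter par (k+1) a :=
                parIter_mono hroot hlt a (by omega)
              exact this
          _ = v := hk
      have : v < a := h1 ▸ hlt v hvr
      exact absurd (lt_of_le_of_lt hav this) (lt_irrefl a)
    rw [phi_of_not_hits hnot, h1]
  · -- par a = v
    exact phi_uniq hroot hlt hva.ne' ⟨0, h1⟩ (a := 0) h1 hva.ne'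

include hroot hlt hadj hdisc in
/-- Key step: if two adjacent vertices have different branches at `v`, the
branch of the first is adjacent to the second. -/
lemma phi_claim {v x y : Fin (m+3)} (hxy : H.Adj x y) (hxv : x ≠ v) (hyv : y ≠ v)
    (hne : phi par v x ≠ phi par v y) : H.Adj y (phi par v x) := by
  obtain ⟨k, l, hik, hjl, hkl, wX, wY⟩ := chains_meet hroot hlt hadj hdisc hxy
    ((m + 2) - (parIter par 0 x).val + ((m + 2) - (parIter par 0 y).val)) 0 0 le_rfl
    (Or.inl rfl) (Or.inr hxy.symm) (Or.inr hxy) (Or.inl rfl)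
  by_cases hx : ∃ k', parIter par (k'+1) x = v
  · -- x's chain hits v
    set k0 := Nat.find hx with hk0_def
    have hc1 : parIter par (k0+1) x = v := Nat.find_spec hx
    have hc0 : parIter par k0 x ≠ v := hits_pred_ne hxv hx
    have hphix : phi par v x = parIter par k0 x := phi_of_hits hx
    rcases le_or_gt k0 k with hk | hk
    · have hin := (wX k0 (by omega) hk).2
      rcases hin with h | h
      · -- parIter k0 x = y : then y's branch equals x's branch
        exfalso
        have hy1 : parIter par (0+1) y = v := by
          show par _ = v
          rw [← h]
          exact hc1
        have : phi par v y = y := phi_uniq hroot hlt hyv ⟨0, hy1⟩ hy1 (by exact hyv)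
        exact hne (by rw [hphix, h, this])
      · rw [hphix]
        exact h
    · -- v lies above the meeting point : contradiction with different branches
      exfalso
      have hXk0 : parIter par k0 x = parIter par (l + (k0 - k)) y := by
        have e1 : parIter par k0 x = parIter par (k0 - k) (parIter par k x) := by
          rw [← parIter_add]
          congr 1
          omega
        have e2 : parIter par (l + (k0 - k)) y
            = parIter par (k0 - k) (parIter par l y) := parIter_add _ _ _
        rw [e1, e2, hkl]
      have hXk1 : parIter par (l + (k0 - k) + 1) y = v := by
        show par _ = v
        rw [← hXk0]
        exact hc1
      have : phi par v y = parIter par (l + (k0 - k)) y :=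
        phi_uniq hroot hlt hyv ⟨l + (k0 - k), hXk1⟩ hXk1 (by rw [← hXk0]; exact hc0)
      exact hne (by rw [hphix, this, hXk0])
  · by_cases hy : ∃ k', parIter par (k'+1) y = v
    · set l0 := Nat.find hy with hl0_def
      have hd1 : parIter par (l0+1) y = v := Nat.find_spec hy
      have hd0 : parIter par l0 y ≠ v := hits_pred_ne hyv hy
      rcases le_or_gt l (l0+1) with hll | hll
      · -- v is on the common part : x's chain hits v, contradiction
        exfalso
        have e1 : parIter par (l0+1) y = parIter par (l0+1-l) (parIter par l y) := by
          rw [← parIter_add]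
          congr 1
          omega
        have e2 : parIter par (k + (l0+1-l)) x = v := by
          rw [parIter_add, hkl, ← e1, hd1]
        rcases Nat.eq_zero_or_pos (k + (l0+1-l)) with h0 | h0
        · rw [h0] at e2
          exact hxv e2
        · obtain ⟨k', hk'⟩ : ∃ k', k + (l0+1-l) = k' + 1 := ⟨k + (l0+1-l) - 1, by omega⟩
          exact hx ⟨k', by rw [← hk']; exact e2⟩
      · -- par v is within the window on y's chain
        have hpv : par v = parIter par (l0+2) y := by
          show par v = par (parIter par (l0+1) y)
          rw [hd1]
        have hin := (wY (l0+2) (by omega) (by omega)).2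
        have hphix : phi par v x = par v := phi_of_not_hits hx
        rcases hin with h | h
        · -- parIter (l0+2) y = y : whole chain is root, contradiction
          exfalso
          have hroot' : parIter par 0 y = root m :=
            eq_root_of_parIter_eq hroot hlt (a := 0) (b := l0+2) (by omega)
              (by exact h.symm)
          have : parIter par (l0+1) y = root m :=
            parIter_root_stab hroot (x := y) hroot' _ (by omega)
          have hvroot : v = root m := by rw [← hd1, this]
          obtain ⟨kk, hkk⟩ := exists_parIter_root hroot hlt x
          rcases Nat.eq_zero_or_pos kk with h0 | h0
          · exact hxv (by rw [h0] at hkk; exact hkk.trans hvroot.symm)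
          · obtain ⟨k', rfl⟩ : ∃ k', kk = k' + 1 := ⟨kk - 1, by omega⟩
            exact hx ⟨k', hkk.trans hvroot.symm⟩
        · rw [hphix, hpv]
          exact h
    · exact absurd (by rw [phi_of_not_hits hx, phi_of_not_hits hy]) hne

include hroot hlt hadj hdisc in
lemma phi_step {v x y : Fin (m+3)} (hxy : H.Adj x y) (hxv : x ≠ v) (hyv : y ≠ v) :
    phi par v x = phi par v y ∨ H.Adj (phi par v x) (phi par v y) := by
  by_cases hne : phi par v x = phi par v y
  · exact Or.inl hne
  · have h1 : H.Adj y (phi par v x) := phi_claim hroot hlt hadj hdisc hxy hxv hyv hne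
    have hpv : phi par v x ≠ v := (phi_mem hroot hlt hxv).ne'
    have h2 : phi par v (phi par v x) = phi par v x := phi_fix hroot hlt (phi_mem hroot hlt hxv)
    have hne2 : phi par v y ≠ phi par v (phi par v x) := by
      rw [h2]
      exact fun h => hne h.symm
    exact Or.inr (phi_claim hroot hlt hadj hdisc h1 hyv hpv hne2)

include hroot hlt hadj hdisc in
lemma phi_walk {v : Fin (m+3)} :
    ∀ {A B : {u : Fin (m+3) | u ≠ v}}, (H.induce {u : Fin (m+3) | u ≠ v}).Walk A B →
      (H.induce ((mkTree par).neighborSet v)).Reachable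
        ⟨phi par v A.1, phi_mem hroot hlt A.2⟩ ⟨phi par v B.1, phi_mem hroot hlt B.2⟩ := by
  intro A B w
  induction w with
  | nil => exact Reachable.refl _
  | @cons A C B h p ih =>
      have hAC : H.Adj A.1 C.1 := h
      rcases phi_step hroot hlt hadj hdisc hAC A.2 C.2 with heq | hadj'
      · have : (⟨phi par v A.1, phi_mem hroot hlt A.2⟩ :
            (mkTree par).neighborSet v) = ⟨phi par v C.1, phi_mem hroot hlt C.2⟩ :=
          Subtype.ext heq
        rw [this]
        exact ih
      · have step : (H.induce ((mkTree par).neighborSet v)).Adj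
            ⟨phi par v A.1, phi_mem hroot hlt A.2⟩ ⟨phi par v C.1, phi_mem hroot hlt C.2⟩ :=
          hadj'
        exact step.reachable.trans ih

include hroot hlt hadj hdisc in
lemma local_conn (hcut : ∀ v : Fin (m+3), (H.induce {u | u ≠ v}).Connected)
    (v : Fin (m+3)) : (H.induce ((mkTree par).neighborSet v)).Connected := by
  rw [SimpleGraph.connected_iff]
  constructor
  · rintro ⟨a, ha⟩ ⟨b, hb⟩
    have hav : a ≠ v := fun h => (mkTree par).irrefl (h ▸ ha : (mkTree par).Adj v v)
    have hbv : b ≠ v := fun h => (mkTree par).irrefl (h ▸ hb : (mkTree par).Adj v v)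
    obtain ⟨w⟩ := (hcut v).preconnected ⟨a, hav⟩ ⟨b, hbv⟩
    have key := phi_walk hroot hlt hadj hdisc (v := v) w
    have ea : phi par v a = a := phi_fix hroot hlt ha
    have eb : phi par v b = b := phi_fix hroot hlt hb
    have h1 : (⟨phi par v a, phi_mem hroot hlt hav⟩ :
        (mkTree par).neighborSet v) = ⟨a, ha⟩ := Subtype.ext ea
    have h2 : (⟨phi par v b, phi_mem hroot hlt hbv⟩ :
        (mkTree par).neighborSet v) = ⟨b, hb⟩ := Subtype.ext eb
    rwa [h1, h2] at key
  · by_cases hv : v = root m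
    · subst hv
      have hne : (⟨m+1, by omega⟩ : Fin (m+3)) ≠ root m := by
        intro h
        have := congrArg Fin.val h
        simp [root] at this
      have hp : par ⟨m+1, by omega⟩ = root m := by
        have h1 := hlt _ hne
        rw [Fin.lt_def] at h1
        have h1' : m + 1 < (par (⟨m+1, by omega⟩ : Fin (m+3))).val := by
          simpa using h1
        have h2 := (par (⟨m+1, by omega⟩ : Fin (m+3))).isLt
        refine Fin.ext ?_
        show (par (⟨m+1, by omega⟩ : Fin (m+3))).val = m + 2
        omega
      exact ⟨⟨⟨m+1, by omega⟩, Or.inr hp, fun h => hne h.symm⟩⟩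
    · exact ⟨⟨par v, Or.inl rfl, ne_of_lt (hlt v hv)⟩⟩

end Chains

/-- Backward core: a 2-connected graph with a strong elimination order (in the
identity labeling) has a locally connected spanning tree. -/
lemma backward_core {H : SimpleGraph (Fin (m+3))} (hseo : IsSEO H)
    (hconn : H.Connected) (hcut : ∀ v : Fin (m+3), (H.induce {u | u ≠ v}).Connected) :
    ∃ T, IsLCST H T := by
  choose par hpar using parent_exists hseo hconn
  have hroot : par (root m) = root m := (hpar (root m)).1 rfl
  have hlt : ∀ z, z ≠ root m → z < par z := fun z hz => ((hpar z).2.1 hz).1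
  have hadj : ∀ z, z ≠ root m → H.Adj z (par z) := fun z hz => ((hpar z).2.1 hz).2
  have hdisc : ∀ z w, H.Adj z w → (∃ t, z < t ∧ (t = w ∨ H.Adj w t)) →
      (par z = w ∨ H.Adj w (par z)) := fun z => (hpar z).2.2
  exact ⟨mkTree par, mkTree_le hroot hlt hadj, mkTree_connected hlt,
    mkTree_acyclic hroot hlt, local_conn hroot hlt hadj hdisc hcut⟩


end

end Construction

theorem strongly_chordal_lcst_iff_two_connected {n : ℕ} (hn : 3 ≤ n)
    (G : SimpleGraph (Fin n))
    (hsc : ∃ e : Fin n ≃ Fin n, IsSEO (SimpleGraph.comap ⇑e G)) :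
    (∃ T, IsLCST G T) ↔
      (G.Connected ∧ ∀ v : Fin n, (G.induce {u | u ≠ v}).Connected) := by
  constructor
  · exact lcst_forward hn
  · rintro ⟨hconn, hcut⟩
    obtain ⟨e, hseo⟩ := hsc
    obtain ⟨m, rfl⟩ : ∃ m, n = m + 3 := ⟨n - 3, by omega⟩
    set H := SimpleGraph.comap ⇑e G with hH
    have isoH : H ≃g G := ⟨e, Iff.rfl⟩
    have hconnH : H.Connected := isoH.connected_iff.mpr hconn
    have hcutH : ∀ v : Fin (m+3), (H.induce {u | u ≠ v}).Connected := by
      intro v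
      have J : (H.induce {u | u ≠ v}) ≃g (G.induce {u | u ≠ e v}) :=
        ⟨e.subtypeEquiv (fun u => by
            constructor
            · exact fun h hh => h (e.injective hh)
            · exact fun h hh => h (congrArg e hh)), Iff.rfl⟩
      exact J.connected_iff.mpr (hcut (e v))
    obtain ⟨T', hle', hconn', hacy', hloc'⟩ := backward_core hseo hconnH hcutH
    have iso2 : SimpleGraph.comap ⇑e.symm T' ≃g T' := ⟨e.symm, Iff.rfl⟩
    refine ⟨SimpleGraph.comap ⇑e.symm T', ?_, ?_, ?_, ?_⟩
    · intro a b hab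
      have h1 : H.Adj (e.symm a) (e.symm b) := hle' hab
      have h2 : G.Adj (e (e.symm a)) (e (e.symm b)) := h1
      simpa using h2
    · exact iso2.connected_iff.mpr hconn'
    · intro v c hc
      let f : SimpleGraph.comap ⇑e.symm T' →g T' := ⟨⇑e.symm, fun h => h⟩
      have hc' : (c.map f).IsCycle :=
        (SimpleGraph.Walk.map_isCycle_iff_of_injective
          (by intro a b hab2; exact e.symm.injective hab2)).mpr hc
      exact hacy' _ hc'
    · intro v
      have hmem : ∀ u : Fin (m+3), u ∈ T'.neighborSet (e.symm v) ↔
          e u ∈ (SimpleGraph.comap ⇑e.symm T').neighborSet v := by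
        intro u
        simp [SimpleGraph.mem_neighborSet]
      have K : (H.induce (T'.neighborSet (e.symm v))) ≃g
          (G.induce ((SimpleGraph.comap ⇑e.symm T').neighborSet v)) :=
        ⟨e.subtypeEquiv hmem, Iff.rfl⟩
      exact K.connected_iff.mp (hloc' (e.symm v))
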